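/- arXiv:1001.1406 — 3 statements merged into one kernel-verified Lean document; each statement's English description precedes it below -/
import Mathlib

section
/- Let p > 3 be a prime. The number of nonzero vectors (v₁,v₂,v₃,v₄) ∈ 𝔽_p⁴ with F(v₁,v₂,v₃,v₄) = 0 equals p³ + p² − p − 1 if p ≡ 1 (mod 4), and equals p³ − p² + p − 1 if p ≡ 3 (mod 4). -/
/-- The Descartes quadratic form over a commutative ring. -/
def descartesForm {R : Type*} [CommRing R] (v : Fin 4 → R) : R :=
  2 * (∑ i, v i ^ 2) - (∑ i, v i) ^ 2

set_option maxHeartbeats 1000000 in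
theorem stmt3 (p : ℕ) (hp : p.Prime) (hp3 : 3 < p) :
    (p % 4 = 1 →
      Nat.card {v : Fin 4 → ZMod p | v ≠ 0 ∧ descartesForm v = 0} = p ^ 3 + p ^ 2 - p - 1) ∧
    (p % 4 = 3 →
      Nat.card {v : Fin 4 → ZMod p | v ≠ 0 ∧ descartesForm v = 0} = p ^ 3 - p ^ 2 + p - 1) := by
  haveI : Fact p.Prime := ⟨hp⟩
  set K := ZMod p with hK
  have htwo : (2 : K) ≠ 0 := by
    intro h
    have h' : ((2 : ℕ) : K) = 0 := by exact_mod_cast h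
    have hd : p ∣ 2 := (ZMod.natCast_eq_zero_iff 2 p).mp h'
    have := Nat.le_of_dvd (by norm_num) hd
    omega
  have hcardK : Fintype.card K = p := ZMod.card p
  -- change of variables
  let ψ : (Fin 4 → K) ≃ (K × K) × (K × K) :=
    { toFun := fun v => ((v 0 - v 1, v 2 - v 3), (v 0 + v 1, v 2 + v 3))
      invFun := fun q => ![2⁻¹ * (q.2.1 + q.1.1), 2⁻¹ * (q.2.1 - q.1.1),
                            2⁻¹ * (q.2.2 + q.1.2), 2⁻¹ * (q.2.2 - q.1.2)]
      left_inv := by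
        intro v
        funext i
        fin_cases i
        · show 2⁻¹ * ((v 0 + v 1) + (v 0 - v 1)) = v 0
          rw [inv_mul_eq_iff_eq_mul₀ htwo]; ring
        · show 2⁻¹ * ((v 0 + v 1) - (v 0 - v 1)) = v 1
          rw [inv_mul_eq_iff_eq_mul₀ htwo]; ring
        · show 2⁻¹ * ((v 2 + v 3) + (v 2 - v 3)) = v 2
          rw [inv_mul_eq_iff_eq_mul₀ htwo]; ring
        · show 2⁻¹ * ((v 2 + v 3) - (v 2 - v 3)) = v 3
          rw [inv_mul_eq_iff_eq_mul₀ htwo]; ring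
      right_inv := by
        intro q
        refine Prod.ext (Prod.ext ?_ ?_) (Prod.ext ?_ ?_) <;>
          simp only [Matrix.cons_val_zero, Matrix.cons_val_one, Matrix.head_cons,
            Matrix.cons_val_two, Matrix.tail_cons, Matrix.cons_val_three, Fin.isValue] <;>
          simp only [← mul_add, ← mul_sub] <;> rw [inv_mul_eq_iff_eq_mul₀ htwo] <;> ring }
  have hψF : ∀ v : Fin 4 → K,
      descartesForm v = (ψ v).1.1 ^ 2 + (ψ v).1.2 ^ 2 - 2 * (ψ v).2.1 * (ψ v).2.2 := by
    intro v
    simp only [descartesForm, Fin.sum_univ_four, ψ, Equiv.coe_fn_mk]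
    ring
  have hψ0 : ψ 0 = 0 := by
    simp only [ψ, Equiv.coe_fn_mk, Pi.zero_apply, sub_zero, add_zero]
    rfl
  -- transfer to the product space
  have step1 : Nat.card {v : Fin 4 → K | v ≠ 0 ∧ descartesForm v = 0} =
      Fintype.card {q : (K × K) × (K × K) // q ≠ 0 ∧ q.1.1 ^ 2 + q.1.2 ^ 2 = 2 * q.2.1 * q.2.2} := by
    rw [Nat.card_eq_fintype_card]
    refine Fintype.card_congr (Equiv.subtypeEquiv ψ ?_)
    intro v
    constructor
    · rintro ⟨hv, hF⟩
      refine ⟨fun h => hv (ψ.injective (h.trans hψ0.symm)), ?_⟩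
      have := hψF v
      rw [hF] at this
      linear_combination -this
    · rintro ⟨hv, hF⟩
      refine ⟨fun h => hv (by rw [h, hψ0]), ?_⟩
      rw [hψF v]
      linear_combination hF
  -- remove zero
  have step2 : Fintype.card {q : (K × K) × (K × K) //
        q ≠ 0 ∧ q.1.1 ^ 2 + q.1.2 ^ 2 = 2 * q.2.1 * q.2.2} + 1 =
      Fintype.card {q : (K × K) × (K × K) // q.1.1 ^ 2 + q.1.2 ^ 2 = 2 * q.2.1 * q.2.2} := by
    rw [Fintype.card_subtype, Fintype.card_subtype]
    have he : (Finset.univ.filter fun q : (K × K) × (K × K) =>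
        q ≠ 0 ∧ q.1.1 ^ 2 + q.1.2 ^ 2 = 2 * q.2.1 * q.2.2) =
        (Finset.univ.filter fun q : (K × K) × (K × K) =>
          q.1.1 ^ 2 + q.1.2 ^ 2 = 2 * q.2.1 * q.2.2).erase 0 := by
      ext q
      simp only [Finset.mem_filter, Finset.mem_univ, true_and, Finset.mem_erase]
    have h0 : ((0 : (K × K) × (K × K))) ∈ (Finset.univ.filter fun q : (K × K) × (K × K) =>
        q.1.1 ^ 2 + q.1.2 ^ 2 = 2 * q.2.1 * q.2.2) := by simp
    rw [he, Finset.card_erase_of_mem h0]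
    have hpos : 0 < (Finset.univ.filter fun q : (K × K) × (K × K) =>
        q.1.1 ^ 2 + q.1.2 ^ 2 = 2 * q.2.1 * q.2.2).card := Finset.card_pos.mpr ⟨0, h0⟩
    omega
  -- fiberwise decomposition
  have step3 : Fintype.card {q : (K × K) × (K × K) //
        q.1.1 ^ 2 + q.1.2 ^ 2 = 2 * q.2.1 * q.2.2} =
      ∑ bd : K × K, Fintype.card {ac : K × K // bd.1 ^ 2 + bd.2 ^ 2 = 2 * ac.1 * ac.2} := by
    rw [Fintype.card_congr (Equiv.subtypeProdEquivSigmaSubtype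
      (fun (bd : K × K) (ac : K × K) => bd.1 ^ 2 + bd.2 ^ 2 = 2 * ac.1 * ac.2))]
    rw [Fintype.card_sigma]
  -- inner count
  have inner : ∀ s : K, Fintype.card {ac : K × K // s = 2 * ac.1 * ac.2} =
      if s = 0 then 2 * p - 1 else p - 1 := by
    intro s
    by_cases hs : s = 0
    · subst hs
      rw [if_pos rfl, Fintype.card_subtype]
      have he : (Finset.univ.filter fun ac : K × K => (0 : K) = 2 * ac.1 * ac.2) =
          (Finset.univ.filter fun ac : K × K => ac.1 = 0) ∪
          (Finset.univ.filter fun ac : K × K => ac.2 = 0) := by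
        rw [← Finset.filter_or]
        apply Finset.filter_congr
        intro q _
        rw [eq_comm, mul_eq_zero, mul_eq_zero]
        simp [htwo]
      have e1 : (Finset.univ.filter fun ac : K × K => ac.1 = 0).card = p := by
        rw [← Fintype.card_subtype]
        rw [Fintype.card_congr (⟨fun q => q.1.2, fun c => ⟨(0, c), rfl⟩,
          fun q => Subtype.ext (Prod.ext q.2.symm rfl), fun c => rfl⟩ :
          {q : K × K // q.1 = 0} ≃ K)]
        exact hcardK
      have e2 : (Finset.univ.filter fun ac : K × K => ac.2 = 0).card = p := by
        rw [← Fintype.card_subtype]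
        rw [Fintype.card_congr (⟨fun q => q.1.1, fun c => ⟨(c, 0), rfl⟩,
          fun q => Subtype.ext (Prod.ext rfl q.2.symm), fun c => rfl⟩ :
          {q : K × K // q.2 = 0} ≃ K)]
        exact hcardK
      have e3 : ((Finset.univ.filter fun ac : K × K => ac.1 = 0) ∩
          (Finset.univ.filter fun ac : K × K => ac.2 = 0)).card = 1 := by
        rw [← Finset.filter_and]
        have : (Finset.univ.filter fun ac : K × K => ac.1 = 0 ∧ ac.2 = 0) = {(0, 0)} := by
          ext q
          simp [Prod.ext_iff]
        rw [this, Finset.card_singleton]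
      have := Finset.card_union_add_card_inter
        (Finset.univ.filter fun ac : K × K => ac.1 = 0)
        (Finset.univ.filter fun ac : K × K => ac.2 = 0)
      rw [he]
      omega
    · rw [if_neg hs]
      have hcard' : Fintype.card {a : K // a ≠ 0} = p - 1 := by
        rw [Fintype.card_subtype_compl, Fintype.card_subtype_eq, hcardK]
      rw [← hcard']
      refine Fintype.card_congr ⟨fun q => ⟨q.1.1, ?_⟩, fun a => ⟨(a.1, (2 * a.1)⁻¹ * s), ?_⟩, ?_, ?_⟩
      · intro h
        apply hs
        rw [q.2, h, mul_zero, zero_mul]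
      · have h2a : (2 * a.1 : K) ≠ 0 := mul_ne_zero htwo a.2
        rw [← mul_assoc, mul_inv_cancel₀ h2a, one_mul]
        try ring
      · rintro ⟨⟨a, c⟩, hq⟩
        have ha : a ≠ 0 := by
          intro h
          apply hs
          rw [hq, h, mul_zero, zero_mul]
        have h2a : (2 * a : K) ≠ 0 := mul_ne_zero htwo ha
        refine Subtype.ext (Prod.ext rfl ?_)
        simp only
        rw [hq]
        rw [← mul_assoc, inv_mul_cancel₀ h2a, one_mul]
        try ring
      · intro a
        rfl
  -- now sum it
  have step4 : (∑ bd : K × K, Fintype.card {ac : K × K // bd.1 ^ 2 + bd.2 ^ 2 = 2 * ac.1 * ac.2}) =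
      (Finset.univ.filter fun bd : K × K => bd.1 ^ 2 + bd.2 ^ 2 = 0).card * (2 * p - 1) +
      (p * p - (Finset.univ.filter fun bd : K × K => bd.1 ^ 2 + bd.2 ^ 2 = 0).card) * (p - 1) := by
    have : ∀ bd : K × K, Fintype.card {ac : K × K // bd.1 ^ 2 + bd.2 ^ 2 = 2 * ac.1 * ac.2} =
        if bd.1 ^ 2 + bd.2 ^ 2 = 0 then 2 * p - 1 else p - 1 := fun bd => inner _
    rw [Finset.sum_congr rfl (fun bd _ => this bd), Finset.sum_ite, Finset.sum_const,
      Finset.sum_const, smul_eq_mul, smul_eq_mul]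
    have htot := Finset.card_filter_add_card_filter_not
      (s := (Finset.univ : Finset (K × K)))
      (p := fun bd : K × K => bd.1 ^ 2 + bd.2 ^ 2 = 0)
    have hcard2 : (Finset.univ : Finset (K × K)).card = p * p := by
      rw [Finset.card_univ, Fintype.card_prod, hcardK]
    have hneg : (Finset.univ.filter fun bd : K × K => ¬ bd.1 ^ 2 + bd.2 ^ 2 = 0).card
        = p * p - (Finset.univ.filter fun bd : K × K => bd.1 ^ 2 + bd.2 ^ 2 = 0).card := by
      omega
    rw [hneg]
  -- compute Z in each case
  have hm4 := hp.eq_one_or_self_of_dvd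
  constructor
  · intro hp1
    -- Z = 2p - 1
    have hsq : IsSquare (-1 : K) := by
      rw [ZMod.exists_sq_eq_neg_one_iff]
      omega
    obtain ⟨i, hi⟩ := hsq
    have hi2 : i ^ 2 = -1 := by rw [sq]; exact hi.symm
    have hine : i ≠ 0 := by
      intro h
      rw [h] at hi2
      have h10 : (1 : K) = 0 := by linear_combination hi2
      exact one_ne_zero h10
    have hZ : (Finset.univ.filter fun bd : K × K => bd.1 ^ 2 + bd.2 ^ 2 = 0).card = 2 * p - 1 := by
      have he : (Finset.univ.filter fun bd : K × K => bd.1 ^ 2 + bd.2 ^ 2 = 0) =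
          (Finset.univ.filter fun bd : K × K => bd.1 = i * bd.2) ∪
          (Finset.univ.filter fun bd : K × K => bd.1 = -(i * bd.2)) := by
        rw [← Finset.filter_or]
        apply Finset.filter_congr
        intro q _
        constructor
        · intro h
          have hfac : (q.1 - i * q.2) * (q.1 + i * q.2) = 0 := by
            linear_combination h - q.2 ^ 2 * hi2
          rcases mul_eq_zero.mp hfac with h' | h'
          · left; linear_combination h'
          · right; linear_combination h'
        · rintro (h | h) <;> rw [h] <;> linear_combination (q.2 : K) ^ 2 * hi2
      have e1 : (Finset.univ.filter fun bd : K × K => bd.1 = i * bd.2).card = p := by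
        rw [← Fintype.card_subtype]
        rw [Fintype.card_congr (⟨fun q => q.1.2, fun d => ⟨(i * d, d), rfl⟩,
          fun q => Subtype.ext (Prod.ext q.2.symm rfl), fun d => rfl⟩ :
          {q : K × K // q.1 = i * q.2} ≃ K)]
        exact hcardK
      have e2 : (Finset.univ.filter fun bd : K × K => bd.1 = -(i * bd.2)).card = p := by
        rw [← Fintype.card_subtype]
        rw [Fintype.card_congr (⟨fun q => q.1.2, fun d => ⟨(-(i * d), d), rfl⟩,
          fun q => Subtype.ext (Prod.ext q.2.symm rfl), fun d => rfl⟩ :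
          {q : K × K // q.1 = -(i * q.2)} ≃ K)]
        exact hcardK
      have e3 : ((Finset.univ.filter fun bd : K × K => bd.1 = i * bd.2) ∩
          (Finset.univ.filter fun bd : K × K => bd.1 = -(i * bd.2))).card = 1 := by
        rw [← Finset.filter_and]
        have : (Finset.univ.filter fun bd : K × K => bd.1 = i * bd.2 ∧ bd.1 = -(i * bd.2)) =
            {(0, 0)} := by
          ext q
          simp only [Finset.mem_filter, Finset.mem_univ, true_and, Finset.mem_singleton,
            Prod.ext_iff]
          constructor
          · rintro ⟨ha1, ha2⟩
            have hd : q.2 = 0 := by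
              have h3 : 2 * (i * q.2) = 0 := by linear_combination ha2 - ha1
              rcases mul_eq_zero.mp h3 with h' | h'
              · exact absurd h' htwo
              · rcases mul_eq_zero.mp h' with h'' | h''
                · exact absurd h'' hine
                · exact h''
            refine ⟨?_, hd⟩
            rw [ha1, hd, mul_zero]
          · rintro ⟨ha1, ha2⟩
            rw [ha1, ha2]
            simp
        rw [this, Finset.card_singleton]
      have := Finset.card_union_add_card_inter
        (Finset.univ.filter fun bd : K × K => bd.1 = i * bd.2)
        (Finset.univ.filter fun bd : K × K => bd.1 = -(i * bd.2))
      rw [he]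
      omega
    have key : Nat.card {v : Fin 4 → K | v ≠ 0 ∧ descartesForm v = 0} + 1 =
        (2 * p - 1) * (2 * p - 1) + (p * p - (2 * p - 1)) * (p - 1) := by
      rw [step1, step2, step3, step4, hZ]
    have harith : (2 * p - 1) * (2 * p - 1) + (p * p - (2 * p - 1)) * (p - 1) =
        p ^ 3 + p ^ 2 - p := by
      have h1 : 1 ≤ 2 * p := by omega
      have h2' : 2 * p - 1 ≤ p * p := le_trans (Nat.sub_le _ _) (by nlinarith)
      have h3 : 1 ≤ p := by omega
      have h4 : p ≤ p ^ 3 + p ^ 2 := by nlinarith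
      zify [h1, h2', h3, h4]
      ring
    rw [harith] at key
    exact Nat.eq_sub_of_add_eq key
  · intro hp3'
    have hnsq : ¬ IsSquare (-1 : K) := by
      rw [ZMod.exists_sq_eq_neg_one_iff]
      omega
    have hZ : (Finset.univ.filter fun bd : K × K => bd.1 ^ 2 + bd.2 ^ 2 = 0).card = 1 := by
      have : (Finset.univ.filter fun bd : K × K => bd.1 ^ 2 + bd.2 ^ 2 = 0) = {(0, 0)} := by
        ext q
        simp only [Finset.mem_filter, Finset.mem_univ, true_and, Finset.mem_singleton,
          Prod.ext_iff]
        constructor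
        · intro h
          have hd : q.2 = 0 := by
            by_contra hd
            apply hnsq
            refine ⟨q.1 * q.2⁻¹, ?_⟩
            have hsq' : (q.1 * q.2⁻¹) * (q.1 * q.2⁻¹) = -1 := by
              have hqq : q.2 * q.2⁻¹ = 1 := mul_inv_cancel₀ hd
              linear_combination q.2⁻¹ ^ 2 * h - (1 + q.2 * q.2⁻¹) * hqq
            exact hsq'.symm
          have hb : q.1 ^ 2 = 0 := by rw [hd] at h; linear_combination h
          exact ⟨pow_eq_zero_iff (by norm_num) |>.mp hb, hd⟩
        · rintro ⟨h1, h2⟩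
          rw [h1, h2]
          ring
      rw [this, Finset.card_singleton]
    have key : Nat.card {v : Fin 4 → K | v ≠ 0 ∧ descartesForm v = 0} + 1 =
        1 * (2 * p - 1) + (p * p - 1) * (p - 1) := by
      rw [step1, step2, step3, step4, hZ]
    have harith : 1 * (2 * p - 1) + (p * p - 1) * (p - 1) = p ^ 3 - p ^ 2 + p := by
      have h1 : 1 ≤ 2 * p := by omega
      have h2' : 1 ≤ p * p := by nlinarith
      have h3 : 1 ≤ p := by omega
      have h4 : p ^ 2 ≤ p ^ 3 := by nlinarith
      zify [h1, h2', h3, h4]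
      ring
    rw [harith] at key
    exact Nat.eq_sub_of_add_eq key
end

section
/- Let p > 3 be a prime and let β(p) denote the ratio of the number of nonzero (v₁,v₂,v₃) ∈ 𝔽_p³ with F(v₁,v₂,v₃,0) = 0 to the number of nonzero (v₁,v₂,v₃,v₄) ∈ 𝔽_p⁴ with F(v₁,v₂,v₃,v₄) = 0. Then β(p) = 1/(p+1) if p ≡ 1 (mod 4), and β(p) = (p+1)/(p²+1) if p ≡ 3 (mod 4). -/
lemma descartes3 {R : Type*} [CommRing R] (a b c : R) :
    descartesForm ![a, b, c, 0] = (a - b - c) ^ 2 - (2 * c) * (2 * b) := by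
  simp [descartesForm, Fin.sum_univ_four]
  ring

lemma descartes4 {R : Type*} [CommRing R] (v : Fin 4 → R) :
    descartesForm v = (v 0 - v 1 - v 2 - v 3) ^ 2
      - 4 * (v 2 * (v 1 + v 3) + v 1 * v 3) := by
  simp [descartesForm, Fin.sum_univ_four]
  ring

section Equivs
variable {p : ℕ} [Fact p.Prime]

noncomputable def equiv3 (h2 : (2 : ZMod p) ≠ 0) :
    {v : Fin 3 → ZMod p // descartesForm ![v 0, v 1, v 2, 0] = 0}
      ≃ {x : ZMod p × (ZMod p × ZMod p) // x.2.1 ^ 2 = x.2.2 * x.1} where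
  toFun v := ⟨(2 * v.1 1, (v.1 0 - v.1 1 - v.1 2, 2 * v.1 2)), by
    have h := v.2
    rw [descartes3, sub_eq_zero] at h
    exact h⟩
  invFun x := ⟨![x.1.2.1 + 2⁻¹ * x.1.1 + 2⁻¹ * x.1.2.2, 2⁻¹ * x.1.1, 2⁻¹ * x.1.2.2], by
    have h := x.2
    simp only [Matrix.cons_val_zero, Matrix.cons_val_one, Matrix.head_cons,
      Matrix.cons_val_two, Matrix.tail_cons]
    rw [descartes3, sub_eq_zero]
    have hi : (2 : ZMod p) * 2⁻¹ = 1 := mul_inv_cancel₀ h2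
    linear_combination h - x.1.2.2 * x.1.1 * (2 * 2⁻¹ + 1) * hi⟩
  left_inv v := by
    obtain ⟨v, hv⟩ := v
    apply Subtype.ext
    funext i
    fin_cases i
    · show (v 0 - v 1 - v 2) + 2⁻¹ * (2 * v 1) + 2⁻¹ * (2 * v 2) = v 0
      field_simp
      ring
    · show 2⁻¹ * (2 * v 1) = v 1
      field_simp
    · show 2⁻¹ * (2 * v 2) = v 2
      field_simp
  right_inv x := by
    obtain ⟨⟨b, u, c⟩, hx⟩ := x
    ext <;>
      simp only [Matrix.cons_val_zero, Matrix.cons_val_one, Matrix.head_cons,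
        Matrix.cons_val_two, Matrix.tail_cons] <;>
      (try (field_simp <;> ring)) <;> field_simp

noncomputable def equiv4 (h2 : (2 : ZMod p) ≠ 0) :
    {v : Fin 4 → ZMod p // descartesForm v = 0}
      ≃ {x : (ZMod p × ZMod p) × (ZMod p × ZMod p) //
          x.2.1 ^ 2 = x.2.2 * (x.1.1 + x.1.2) + x.1.1 * x.1.2} where
  toFun v := ⟨((v.1 1, v.1 3), (2⁻¹ * (v.1 0 - v.1 1 - v.1 2 - v.1 3), v.1 2)), by
    have h := v.2
    rw [descartes4, sub_eq_zero] at h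
    have hi : (2 : ZMod p) * 2⁻¹ = 1 := mul_inv_cancel₀ h2
    simp only
    linear_combination 2⁻¹ ^ 2 * h
      + (v.1 2 * (v.1 1 + v.1 3) + v.1 1 * v.1 3) * (2 * 2⁻¹ + 1) * hi⟩
  invFun x := ⟨![2 * x.1.2.1 + x.1.1.1 + x.1.2.2 + x.1.1.2,
      x.1.1.1, x.1.2.2, x.1.1.2], by
    have h := x.2
    rw [descartes4, sub_eq_zero]
    simp only [Matrix.cons_val_zero, Matrix.cons_val_one, Matrix.head_cons,
      Matrix.cons_val_two, Matrix.tail_cons, Matrix.cons_val_three]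
    linear_combination 4 * h⟩
  left_inv v := by
    obtain ⟨v, hv⟩ := v
    apply Subtype.ext
    funext i
    fin_cases i
    · show 2 * (2⁻¹ * (v 0 - v 1 - v 2 - v 3)) + v 1 + v 2 + v 3 = v 0
      field_simp
      ring
    · rfl
    · rfl
    · rfl
  right_inv x := by
    obtain ⟨⟨⟨b, d⟩, w, c⟩, hx⟩ := x
    ext <;>
      simp only [Matrix.cons_val_zero, Matrix.cons_val_one, Matrix.head_cons,
        Matrix.cons_val_two, Matrix.tail_cons, Matrix.cons_val_three] <;>
      (try rfl) <;> (try (field_simp <;> ring)) <;> field_simp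

end Equivs

lemma card_succ {α : Type*} [Fintype α] [DecidableEq α] (P : α → Prop) [DecidablePred P]
    (a : α) (ha : P a) :
    Nat.card {x : α // x ≠ a ∧ P x} + 1 = Nat.card {x : α // P x} := by
  rw [Nat.card_eq_fintype_card, Nat.card_eq_fintype_card, Fintype.card_subtype,
    Fintype.card_subtype]
  have h : Finset.univ.filter P = insert a (Finset.univ.filter fun x => x ≠ a ∧ P x) := by
    ext x
    simp only [Finset.mem_filter, Finset.mem_univ, true_and, Finset.mem_insert]
    by_cases hx : x = a
    · subst hx; simp [ha]
    · simp [hx]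
  rw [h, Finset.card_insert_of_notMem (by simp)]


section Aux
variable {p : ℕ} [Fact p.Prime]

lemma pne : NeZero p := ⟨(Fact.out : p.Prime).pos.ne'⟩

lemma fiberA (α β : ZMod p) (hα : α ≠ 0) :
    Nat.card {y : ZMod p × ZMod p // y.1 ^ 2 = y.2 * α + β} = p := by
  haveI := pne (p := p)
  have e : {y : ZMod p × ZMod p // y.1 ^ 2 = y.2 * α + β} ≃ ZMod p :=
    { toFun := fun y => y.1.1
      invFun := fun w => ⟨(w, (w ^ 2 - β) / α), by field_simp; ring⟩
      left_inv := fun y => by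
        obtain ⟨⟨w, c⟩, h⟩ := y
        simp only [Subtype.mk.injEq, Prod.mk.injEq]
        refine ⟨trivial, ?_⟩
        rw [div_eq_iff hα]
        linear_combination h
      right_inv := fun w => rfl }
  rw [Nat.card_congr e, Nat.card_zmod]

lemma fiberA' (α : ZMod p) (hα : α ≠ 0) :
    Nat.card {y : ZMod p × ZMod p // y.1 ^ 2 = y.2 * α} = p :=
  (Nat.card_congr (Equiv.subtypeEquivRight (fun y => by rw [add_zero]))).trans
    (fiberA α 0 hα)

lemma fiberZ :
    Nat.card {y : ZMod p × ZMod p // y.1 ^ 2 = y.2 * (0 : ZMod p)} = p := by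
  haveI := pne (p := p)
  have e : {y : ZMod p × ZMod p // y.1 ^ 2 = y.2 * (0 : ZMod p)} ≃ ZMod p :=
    { toFun := fun y => y.1.2
      invFun := fun c => ⟨(0, c), by simp⟩
      left_inv := fun y => by
        obtain ⟨⟨w, c⟩, h⟩ := y
        simp only [mul_zero, pow_eq_zero_iff (two_ne_zero)] at h
        simp [h]
      right_inv := fun w => rfl }
  rw [Nat.card_congr e, Nat.card_zmod]

lemma fiberC (β : ZMod p) :
    Nat.card {y : ZMod p × ZMod p // y.1 ^ 2 = β}
      = Nat.card {x : ZMod p // x ^ 2 = β} * p := by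
  haveI := pne (p := p)
  have e : {y : ZMod p × ZMod p // y.1 ^ 2 = β}
      ≃ {x : ZMod p // x ^ 2 = β} × ZMod p :=
    { toFun := fun y => (⟨y.1.1, y.2⟩, y.1.2)
      invFun := fun z => ⟨(z.1.1, z.2), z.1.2⟩
      left_inv := fun y => rfl
      right_inv := fun z => rfl }
  rw [Nat.card_congr e, Nat.card_prod, Nat.card_zmod]

lemma sq_scale (b : ZMod p) (hb : b ≠ 0) :
    Nat.card {x : ZMod p // x ^ 2 = -(b ^ 2)}
      = Nat.card {x : ZMod p // x ^ 2 = -1} := by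
  have e : {x : ZMod p // x ^ 2 = -(b ^ 2)} ≃ {x : ZMod p // x ^ 2 = -1} :=
    { toFun := fun x => ⟨x.1 / b, by
        obtain ⟨x, h⟩ := x
        field_simp
        linear_combination h⟩
      invFun := fun x => ⟨x.1 * b, by
        obtain ⟨x, h⟩ := x
        simp only
        linear_combination b ^ 2 * h⟩
      left_inv := fun x => by
        obtain ⟨x, h⟩ := x
        simp only [Subtype.mk.injEq]
        field_simp
      right_inv := fun x => by
        obtain ⟨x, h⟩ := x
        simp only [Subtype.mk.injEq]
        field_simp }
  exact Nat.card_congr e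

lemma count3 :
    Nat.card {x : ZMod p × (ZMod p × ZMod p) // x.2.1 ^ 2 = x.2.2 * x.1} = p * p := by
  haveI := pne (p := p)
  rw [Nat.card_eq_fintype_card,
    Fintype.card_congr
      (Equiv.subtypeProdEquivSigmaSubtype
        (fun b (y : ZMod p × ZMod p) => y.1 ^ 2 = y.2 * b)),
    Fintype.card_sigma]
  have h : ∀ b : ZMod p,
      Fintype.card {y : ZMod p × ZMod p // y.1 ^ 2 = y.2 * b} = p := by
    intro b
    rw [← Nat.card_eq_fintype_card]
    by_cases hb : b = 0
    · subst hb; exact fiberZ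
    · exact fiberA' b hb
  simp only [h, Finset.sum_const, Finset.card_univ, ZMod.card, smul_eq_mul]

lemma count4 :
    Nat.card {x : (ZMod p × ZMod p) × (ZMod p × ZMod p) //
        x.2.1 ^ 2 = x.2.2 * (x.1.1 + x.1.2) + x.1.1 * x.1.2}
      = p + (p - 1) * (Nat.card {x : ZMod p // x ^ 2 = -1} * p)
        + p * ((p - 1) * p) := by
  haveI := pne (p := p)
  set k := Nat.card {x : ZMod p // x ^ 2 = -1} with hk
  set f : ZMod p × ZMod p → ℕ :=
    fun bd => Nat.card {y : ZMod p × ZMod p //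
      y.1 ^ 2 = y.2 * (bd.1 + bd.2) + bd.1 * bd.2} with hf
  have h1 : ∀ b d : ZMod p, b + d ≠ 0 → f (b, d) = p := fun b d hbd =>
    fiberA (b + d) (b * d) hbd
  have h2 : ∀ b : ZMod p, b ≠ 0 → f (b, -b) = k * p := by
    intro b hb
    have e : {y : ZMod p × ZMod p // y.1 ^ 2 = y.2 * (b + -b) + b * -b}
        ≃ {y : ZMod p × ZMod p // y.1 ^ 2 = -(b ^ 2)} :=
      Equiv.subtypeEquivRight (fun y => by
        constructor <;> intro hy <;> linear_combination hy)
    rw [hf]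
    exact (Nat.card_congr e).trans ((fiberC _).trans (by rw [sq_scale b hb]))
  have h3 : f (0, 0) = p := by
    have e : {y : ZMod p × ZMod p //
        y.1 ^ 2 = y.2 * ((0 : ZMod p) + 0) + 0 * 0}
        ≃ {y : ZMod p × ZMod p // y.1 ^ 2 = y.2 * (0 : ZMod p)} :=
      Equiv.subtypeEquivRight (fun y => by norm_num)
    exact (Nat.card_congr e).trans fiberZ
  have main : Nat.card {x : (ZMod p × ZMod p) × (ZMod p × ZMod p) //
      x.2.1 ^ 2 = x.2.2 * (x.1.1 + x.1.2) + x.1.1 * x.1.2} = ∑ bd, f bd := by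
    rw [Nat.card_eq_fintype_card,
      Fintype.card_congr
        (Equiv.subtypeProdEquivSigmaSubtype
          (fun (bd : ZMod p × ZMod p) (y : ZMod p × ZMod p) =>
            y.1 ^ 2 = y.2 * (bd.1 + bd.2) + bd.1 * bd.2)),
      Fintype.card_sigma]
    exact Finset.sum_congr rfl fun bd _ => (Nat.card_eq_fintype_card).symm
  rw [main, Fintype.sum_prod_type]
  have inner : ∀ b : ZMod p, (∑ d, f (b, d)) = f (b, -b) + (p - 1) * p := by
    intro b
    rw [← Finset.add_sum_erase Finset.univ (fun d => f (b, d)) (Finset.mem_univ (-b))]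
    congr 1
    rw [Finset.sum_congr rfl (fun d hd => h1 b d (fun hc => (Finset.mem_erase.mp hd).1
        (by linear_combination hc))),
      Finset.sum_const, Finset.card_erase_of_mem (Finset.mem_univ _),
      Finset.card_univ, ZMod.card, smul_eq_mul]
  simp only [inner]
  rw [Finset.sum_add_distrib, Finset.sum_const, Finset.card_univ, ZMod.card, smul_eq_mul]
  congr 1
  rw [← Finset.add_sum_erase Finset.univ (fun b => f (b, -b)) (Finset.mem_univ 0)]
  rw [show f (0, -0) = p from by rw [neg_zero]; exact h3]
  congr 1
  rw [Finset.sum_congr rfl (fun b hb => h2 b (Finset.mem_erase.mp hb).1),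
    Finset.sum_const, Finset.card_erase_of_mem (Finset.mem_univ _),
    Finset.card_univ, ZMod.card, smul_eq_mul]

end Aux


section Aux2
variable {p : ℕ} [Fact p.Prime]

lemma kval (hp2 : p ≠ 2) :
    (Nat.card {x : ZMod p // x ^ 2 = -1} : ℤ) = ZMod.χ₄ p + 1 := by
  haveI : NeZero p := ⟨(Fact.out : p.Prime).pos.ne'⟩
  have h := legendreSym.card_sqrts (p := p) hp2 (-1)
  rw [legendreSym.at_neg_one hp2] at h
  have e : {x : ZMod p // x ^ 2 = -1} ≃ {x : ZMod p | x ^ 2 = ((-1 : ℤ) : ZMod p)} :=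
    Equiv.subtypeEquivRight (fun x => by push_cast; exact Iff.rfl)
  rw [Nat.card_congr e, Nat.card_eq_card_toFinset]
  exact_mod_cast h

end Aux2


theorem stmt6 (p : ℕ) (hp : p.Prime) (hp3 : 3 < p) :
    (p % 4 = 1 →
      (Nat.card {v : Fin 3 → ZMod p | v ≠ 0 ∧ descartesForm ![v 0, v 1, v 2, 0] = 0} : ℚ) /
        (Nat.card {v : Fin 4 → ZMod p | v ≠ 0 ∧ descartesForm v = 0} : ℚ) =
        1 / ((p : ℚ) + 1)) ∧
    (p % 4 = 3 →
      (Nat.card {v : Fin 3 → ZMod p | v ≠ 0 ∧ descartesForm ![v 0, v 1, v 2, 0] = 0} : ℚ) /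
        (Nat.card {v : Fin 4 → ZMod p | v ≠ 0 ∧ descartesForm v = 0} : ℚ) =
        ((p : ℚ) + 1) / ((p : ℚ) ^ 2 + 1)) := by
  haveI : Fact p.Prime := ⟨hp⟩
  haveI : NeZero p := ⟨hp.pos.ne'⟩
  have hp2 : p ≠ 2 := by omega
  have h2 : (2 : ZMod p) ≠ 0 := by
    intro h
    have h2' : ((2 : ℕ) : ZMod p) = 0 := by exact_mod_cast h
    rw [ZMod.natCast_eq_zero_iff] at h2'
    have := (Nat.prime_dvd_prime_iff_eq hp Nat.prime_two).mp h2'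
    exact hp2 this
  set k := Nat.card {x : ZMod p // x ^ 2 = -1} with hkdef
  have hN3 : Nat.card
      {v : Fin 3 → ZMod p | v ≠ 0 ∧ descartesForm ![v 0, v 1, v 2, 0] = 0} + 1
      = p * p := by
    have hc := card_succ (fun v : Fin 3 → ZMod p => descartesForm ![v 0, v 1, v 2, 0] = 0)
      0 (by norm_num [descartes3])
    exact hc.trans ((Nat.card_congr (equiv3 h2)).trans count3)
  have hN4 : Nat.card {v : Fin 4 → ZMod p | v ≠ 0 ∧ descartesForm v = 0} + 1
      = p + (p - 1) * (k * p) + p * ((p - 1) * p) := by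
    have hc := card_succ (fun v : Fin 4 → ZMod p => descartesForm v = 0)
      0 (by norm_num [descartes4])
    exact hc.trans ((Nat.card_congr (equiv4 h2)).trans count4)
  have hq4 : (4 : ℚ) ≤ (p : ℚ) := by exact_mod_cast hp3
  have hcast : ((p - 1 : ℕ) : ℚ) = (p : ℚ) - 1 := by
    rw [Nat.cast_sub (Nat.Prime.one_lt hp).le]
    norm_num
  have e3 : (Nat.card
      {v : Fin 3 → ZMod p | v ≠ 0 ∧ descartesForm ![v 0, v 1, v 2, 0] = 0} : ℚ)
      = (p : ℚ) ^ 2 - 1 := by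
    have h' := congrArg (fun n : ℕ => (n : ℚ)) hN3
    simp only [Nat.cast_add, Nat.cast_mul, Nat.cast_one] at h'
    nlinarith [h']
  have e4 : (Nat.card {v : Fin 4 → ZMod p | v ≠ 0 ∧ descartesForm v = 0} : ℚ)
      = (p : ℚ) + ((p : ℚ) - 1) * ((k : ℚ) * p) + (p : ℚ) * (((p : ℚ) - 1) * p) - 1 := by
    have h' := congrArg (fun n : ℕ => (n : ℚ)) hN4
    simp only [Nat.cast_add, Nat.cast_mul, Nat.cast_one, hcast] at h'
    linarith [h']
  constructor
  · intro h1
    have hk : k = 2 := by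
      have hv := kval (p := p) hp2
      rw [ZMod.χ₄_nat_one_mod_four h1, ← hkdef] at hv
      norm_num at hv
      exact_mod_cast hv
    have e4' : (Nat.card {v : Fin 4 → ZMod p | v ≠ 0 ∧ descartesForm v = 0} : ℚ)
        = (p : ℚ) ^ 3 + (p : ℚ) ^ 2 - (p : ℚ) - 1 := by
      rw [e4, hk]
      push_cast
      ring
    rw [e3, e4', div_eq_div_iff
      (ne_of_gt (by nlinarith)) (ne_of_gt (by nlinarith))]
    ring
  · intro h3
    have hk : k = 0 := by
      have hv := kval (p := p) hp2
      rw [ZMod.χ₄_nat_three_mod_four h3, ← hkdef] at hv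
      norm_num at hv
      exact_mod_cast hv
    have e4' : (Nat.card {v : Fin 4 → ZMod p | v ≠ 0 ∧ descartesForm v = 0} : ℚ)
        = (p : ℚ) ^ 3 - (p : ℚ) ^ 2 + (p : ℚ) - 1 := by
      rw [e4, hk]
      push_cast
      ring
    rw [e3, e4', div_eq_div_iff
      (ne_of_gt (by nlinarith)) (ne_of_gt (by nlinarith))]
    ring
end

section
/- Let p > 3 be a prime and let g(p) denote the ratio of the number of nonzero (v₁,v₂) ∈ 𝔽_p² with F(v₁,v₂,0,0) = 0 to the number of nonzero (v₁,v₂,v₃,v₄) ∈ 𝔽_p⁴ with F(v₁,v₂,v₃,v₄) = 0. Then g(p) = 1/(p+1)² if p ≡ 1 (mod 4), and g(p) = 1/(p²+1) if p ≡ 3 (mod 4). -/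
open Finset

section aux

variable {p : ℕ} [Fact p.Prime]

lemma my_two_ne_zero (hp2 : p ≠ 2) : (2 : ZMod p) ≠ 0 := by
  intro h
  have : ((2 : ℕ) : ZMod p) = 0 := by exact_mod_cast h
  have := (ZMod.natCast_eq_zero_iff 2 p).mp this
  exact hp2 ((Nat.prime_dvd_prime_iff_eq (Fact.out) Nat.prime_two).mp this)

lemma fiber_one (u t : ZMod p) (hu : u ≠ 0) :
    (univ.filter fun b : ZMod p => t = u * b).card = 1 := by
  have : (univ.filter fun b : ZMod p => t = u * b) = {u⁻¹ * t} := by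
    ext b
    simp only [mem_filter, mem_univ, true_and, mem_singleton]
    constructor
    · rintro rfl; field_simp
    · rintro rfl; field_simp
  rw [this, card_singleton]

lemma card_ne_zero' : (univ.filter fun x : ZMod p => ¬ x = 0).card = p - 1 := by
  have : (univ.filter fun x : ZMod p => ¬ x = 0) = univ.erase 0 := by
    ext x; simp [Finset.mem_erase]
  rw [this, Finset.card_erase_of_mem (mem_univ 0), card_univ, ZMod.card]

lemma my_sum_ite_zero (A : ℕ) : (∑ x : ZMod p, if x = 0 then A else 1) = A + (p - 1) := by
  have h : ∀ x : ZMod p, (if x = 0 then A else 1)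
      = (if x = 0 then A else 0) + (if ¬ x = 0 then 1 else 0) := by
    intro x; by_cases hx : x = 0 <;> simp [hx]
  simp_rw [h]
  rw [Finset.sum_add_distrib, Finset.sum_ite_eq' univ (0 : ZMod p) (fun _ => A),
    ← Finset.card_filter, card_ne_zero']
  simp

/-- fibers of (a,c) ↦ 2*a*c -/
lemma card_two_mul (hp2 : p ≠ 2) (t : ZMod p) :
    (univ.filter fun x : ZMod p × ZMod p => t = 2 * x.1 * x.2).card =
      (p - 1) + if t = 0 then p else 0 := by
  have h2 : (2 : ZMod p) ≠ 0 := my_two_ne_zero hp2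
  rw [Finset.card_filter, Fintype.sum_prod_type]
  have hsplit : ∀ a : ZMod p, (∑ b : ZMod p, if t = 2 * a * b then 1 else 0) =
      if a = 0 then (if t = 0 then p else 0) else 1 := by
    intro a
    by_cases ha : a = 0
    · subst ha
      simp only [mul_zero, zero_mul, if_pos rfl]
      by_cases ht : t = 0
      · subst ht; simp [ZMod.card]
      · simp [ht]
    · rw [if_neg ha, ← Finset.card_filter, fiber_one (2 * a) t (mul_ne_zero h2 ha)]
  simp_rw [hsplit]
  rw [my_sum_ite_zero]
  omega

end aux

section aux2
variable {p : ℕ} [Fact p.Prime]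

lemma my_sum_ite_gen (A B : ℕ) : (∑ x : ZMod p, if x = 0 then A else B) = A + (p - 1) * B := by
  have h : ∀ x : ZMod p, (if x = 0 then A else B)
      = (if x = 0 then A else 0) + (if ¬ x = 0 then B else 0) := by
    intro x; by_cases hx : x = 0 <;> simp [hx]
  simp_rw [h]
  rw [Finset.sum_add_distrib, Finset.sum_ite_eq' univ (0 : ZMod p) (fun _ => A),
    Finset.sum_ite, Finset.sum_const, Finset.sum_const, card_ne_zero']
  simp

lemma sq_fiber_one (hp2 : p ≠ 2) (h1 : p % 4 = 1) (d : ZMod p) :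
    (univ.filter fun b : ZMod p => b ^ 2 + d ^ 2 = 0).card = if d = 0 then 1 else 2 := by
  by_cases hd : d = 0
  · subst hd
    have : (univ.filter fun b : ZMod p => b ^ 2 + 0 ^ 2 = 0) = {(0 : ZMod p)} := by
      ext b; simp [pow_eq_zero_iff]
    rw [this]; simp
  · rw [if_neg hd]
    obtain ⟨i, hi⟩ : IsSquare (-1 : ZMod p) := by
      rw [ZMod.exists_sq_eq_neg_one_iff]; omega
    have hi' : i ^ 2 = -1 := by rw [sq]; exact hi.symm
    have hine : i ≠ 0 := by
      intro h; rw [h] at hi'; simp at hi'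
    have key : ∀ b : ZMod p, b ^ 2 + d ^ 2 = (b - i * d) * (b + i * d) := by
      intro b; linear_combination (d ^ 2) * hi'
    have hset : (univ.filter fun b : ZMod p => b ^ 2 + d ^ 2 = 0)
        = {i * d, -(i * d)} := by
      ext b
      simp only [mem_filter, mem_univ, true_and, mem_insert, mem_singleton, key,
        mul_eq_zero, sub_eq_zero, add_eq_zero_iff_eq_neg]
    rw [hset]
    rw [Finset.card_insert_of_notMem, card_singleton]
    simp only [mem_singleton]
    intro h
    have h2 : (2 : ZMod p) ≠ 0 := my_two_ne_zero hp2
    have : (2 : ZMod p) * (i * d) = 0 := by linear_combination h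
    exact (mul_ne_zero hine hd) (by
      rcases mul_eq_zero.mp this with h' | h'
      · exact absurd h' h2
      · exact h')

lemma sq_fiber_three (h3 : p % 4 = 3) (d : ZMod p) :
    (univ.filter fun b : ZMod p => b ^ 2 + d ^ 2 = 0).card = if d = 0 then 1 else 0 := by
  by_cases hd : d = 0
  · subst hd
    have : (univ.filter fun b : ZMod p => b ^ 2 + 0 ^ 2 = 0) = {(0 : ZMod p)} := by
      ext b; simp [pow_eq_zero_iff]
    rw [this]; simp
  · rw [if_neg hd, Finset.card_eq_zero, Finset.filter_eq_empty_iff]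
    intro b _
    intro hb
    have hsq : ((b * d⁻¹) : ZMod p) ^ 2 = -1 := by
      have hd' : (d : ZMod p) ≠ 0 := hd
      field_simp
      linear_combination hb
    have : IsSquare (-1 : ZMod p) := ⟨b * d⁻¹, by rw [← hsq, sq]⟩
    rw [ZMod.exists_sq_eq_neg_one_iff] at this
    omega

lemma card_Z_one (hp2 : p ≠ 2) (h1 : p % 4 = 1) :
    (univ.filter fun y : ZMod p × ZMod p => y.1 ^ 2 + y.2 ^ 2 = 0).card = 1 + (p - 1) * 2 := by
  rw [Finset.card_filter, Fintype.sum_prod_type_right]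
  have : ∀ d : ZMod p, (∑ b : ZMod p, if b ^ 2 + d ^ 2 = 0 then 1 else 0)
      = if d = 0 then 1 else 2 := by
    intro d; rw [← Finset.card_filter, sq_fiber_one hp2 h1 d]
  simp_rw [this]
  rw [my_sum_ite_gen]

lemma card_Z_three (h3 : p % 4 = 3) :
    (univ.filter fun y : ZMod p × ZMod p => y.1 ^ 2 + y.2 ^ 2 = 0).card = 1 := by
  rw [Finset.card_filter, Fintype.sum_prod_type_right]
  have : ∀ d : ZMod p, (∑ b : ZMod p, if b ^ 2 + d ^ 2 = 0 then 1 else 0)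
      = if d = 0 then 1 else 0 := by
    intro d; rw [← Finset.card_filter, sq_fiber_three h3 d]
  simp_rw [this]
  rw [my_sum_ite_gen]
  simp

lemma card_quad (hp2 : p ≠ 2) :
    (univ.filter fun x : (ZMod p × ZMod p) × (ZMod p × ZMod p) =>
      x.1.1 ^ 2 + x.1.2 ^ 2 = 2 * x.2.1 * x.2.2).card
    = p ^ 2 * (p - 1) +
      p * (univ.filter fun y : ZMod p × ZMod p => y.1 ^ 2 + y.2 ^ 2 = 0).card := by
  rw [Finset.card_filter, Fintype.sum_prod_type]
  have inner : ∀ bd : ZMod p × ZMod p,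
      (∑ ac : ZMod p × ZMod p, if bd.1 ^ 2 + bd.2 ^ 2 = 2 * ac.1 * ac.2 then 1 else 0)
      = (p - 1) + if bd.1 ^ 2 + bd.2 ^ 2 = 0 then p else 0 := by
    intro bd
    rw [← Finset.card_filter, card_two_mul hp2]
  simp_rw [inner]
  rw [Finset.sum_add_distrib, Finset.sum_const, card_univ, Fintype.card_prod, ZMod.card]
  have : ∀ bd : ZMod p × ZMod p,
      (if bd.1 ^ 2 + bd.2 ^ 2 = 0 then p else 0)
      = p * (if bd.1 ^ 2 + bd.2 ^ 2 = 0 then 1 else 0) := by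
    intro bd; split <;> simp
  simp_rw [this]
  rw [← Finset.mul_sum, ← Finset.card_filter]
  simp only [smul_eq_mul]
  ring

end aux2

section main
variable {p : ℕ} [Fact p.Prime]

lemma ncard_filter {α : Type*} [Fintype α] (P : α → Prop) [DecidablePred P] :
    Nat.card {v : α | P v} = (univ.filter P).card := by
  rw [Nat.card_coe_set_eq, Set.ncard_eq_toFinset_card', Set.toFinset_setOf]

lemma card_main (hp2 : p ≠ 2) :
    (univ.filter fun v : Fin 4 → ZMod p => descartesForm v = 0).card =
    (univ.filter fun x : (ZMod p × ZMod p) × (ZMod p × ZMod p) =>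
      x.1.1 ^ 2 + x.1.2 ^ 2 = 2 * x.2.1 * x.2.2).card := by
  have h2 : (2 : ZMod p) ≠ 0 := my_two_ne_zero hp2
  let e : (Fin 4 → ZMod p) ≃ ((ZMod p × ZMod p) × (ZMod p × ZMod p)) :=
  { toFun := fun v => ((v 0 - v 1, v 2 - v 3), (v 0 + v 1, v 2 + v 3))
    invFun := fun x => ![(x.2.1 + x.1.1) * 2⁻¹, (x.2.1 - x.1.1) * 2⁻¹,
                         (x.2.2 + x.1.2) * 2⁻¹, (x.2.2 - x.1.2) * 2⁻¹]
    left_inv := by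
      have e0 : (⟨0, by norm_num⟩ : Fin 4) = 0 := rfl
      have e1 : (⟨1, by norm_num⟩ : Fin 4) = 1 := rfl
      have e2 : (⟨2, by norm_num⟩ : Fin 4) = 2 := rfl
      have e3 : (⟨3, by norm_num⟩ : Fin 4) = 3 := rfl
      intro v; funext i
      fin_cases i <;>
        simp only [e0, e1, e2, e3, Matrix.cons_val_zero, Matrix.cons_val_one, Matrix.head_cons,
          Matrix.cons_val_two, Matrix.cons_val_three, Matrix.tail_cons] <;>
        field_simp <;> ring
    right_inv := by
      intro x
      refine Prod.ext (Prod.ext ?_ ?_) (Prod.ext ?_ ?_) <;>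
        (simp only [Matrix.cons_val_zero, Matrix.cons_val_one, Matrix.head_cons,
          Matrix.cons_val_two, Matrix.cons_val_three, Matrix.tail_cons] <;> field_simp <;> ring) }
  apply Finset.card_equiv e
  intro v
  simp only [mem_filter, mem_univ, true_and, e, Equiv.coe_fn_mk]
  have hF : descartesForm v =
      ((v 0 - v 1) ^ 2 + (v 2 - v 3) ^ 2) - 2 * (v 0 + v 1) * (v 2 + v 3) := by
    simp [descartesForm, Fin.sum_univ_four]; ring
  rw [hF, sub_eq_zero]

lemma card_two_vars : (univ.filter fun v : Fin 2 → ZMod p =>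
    v ≠ 0 ∧ descartesForm ![v 0, v 1, 0, 0] = 0).card = p - 1 := by
  have hF : ∀ v : Fin 2 → ZMod p, descartesForm ![v 0, v 1, 0, 0] = (v 0 - v 1) ^ 2 := by
    intro v
    simp [descartesForm, Fin.sum_univ_four]; ring
  have hpred : ∀ v : Fin 2 → ZMod p,
      (v ≠ 0 ∧ descartesForm ![v 0, v 1, 0, 0] = 0) ↔ (v 0 ≠ 0 ∧ v 1 = v 0) := by
    intro v
    rw [hF, pow_eq_zero_iff (by norm_num), sub_eq_zero]
    constructor
    · rintro ⟨hv, h01⟩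
      refine ⟨fun h0 => hv (funext fun i => ?_), h01.symm⟩
      fin_cases i
      · exact h0
      · show v 1 = 0
        rw [← h01]; exact h0
    · rintro ⟨h0, h10⟩
      refine ⟨fun h => h0 ?_, h10.symm⟩
      rw [h]; rfl
  rw [show (univ.filter fun v : Fin 2 → ZMod p =>
      v ≠ 0 ∧ descartesForm ![v 0, v 1, 0, 0] = 0) =
      univ.filter (fun v : Fin 2 → ZMod p => v 0 ≠ 0 ∧ v 1 = v 0) from by
    ext v; simp only [mem_filter, mem_univ, true_and]; exact hpred v]
  rw [← card_ne_zero' (p := p)]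
  apply Finset.card_bij (fun v _ => v 0)
  · intro v hv
    simp only [mem_filter, mem_univ, true_and] at hv ⊢
    exact hv.1
  · intro v hv w hw h
    simp only [mem_filter, mem_univ, true_and] at hv hw
    funext i
    fin_cases i
    · exact h
    · show v 1 = w 1
      rw [hv.2, hw.2]; exact h
  · intro t ht
    simp only [mem_filter, mem_univ, true_and] at ht
    exact ⟨fun _ => t, by simp [ht], rfl⟩

end main

theorem stmt7 (p : ℕ) (hp : p.Prime) (hp3 : 3 < p) :
    (p % 4 = 1 →
      (Nat.card {v : Fin 2 → ZMod p | v ≠ 0 ∧ descartesForm ![v 0, v 1, 0, 0] = 0} : ℚ) /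
        (Nat.card {v : Fin 4 → ZMod p | v ≠ 0 ∧ descartesForm v = 0} : ℚ) =
        1 / ((p : ℚ) + 1) ^ 2) ∧
    (p % 4 = 3 →
      (Nat.card {v : Fin 2 → ZMod p | v ≠ 0 ∧ descartesForm ![v 0, v 1, 0, 0] = 0} : ℚ) /
        (Nat.card {v : Fin 4 → ZMod p | v ≠ 0 ∧ descartesForm v = 0} : ℚ) =
        1 / ((p : ℚ) ^ 2 + 1)) := by

  haveI : Fact p.Prime := ⟨hp⟩
  have hp2 : p ≠ 2 := by omega
  have h1p : 1 ≤ p := by omega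
  have h4p : (4:ℕ) ≤ p := by omega
  have hnum : Nat.card {v : Fin 2 → ZMod p | v ≠ 0 ∧ descartesForm ![v 0, v 1, 0, 0] = 0}
      = p - 1 := by
    rw [ncard_filter]; exact card_two_vars
  have hden : Nat.card {v : Fin 4 → ZMod p | v ≠ 0 ∧ descartesForm v = 0}
      = (univ.filter fun v : Fin 4 → ZMod p => descartesForm v = 0).card - 1 := by
    rw [ncard_filter]
    have h0mem : (0 : Fin 4 → ZMod p) ∈ univ.filter fun v => descartesForm v = 0 := by
      simp only [Finset.mem_filter, Finset.mem_univ, true_and]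
      simp [descartesForm]
    have hset : (univ.filter fun v : Fin 4 → ZMod p => v ≠ 0 ∧ descartesForm v = 0)
        = (univ.filter fun v : Fin 4 → ZMod p => descartesForm v = 0).erase 0 := by
      ext v; simp [Finset.mem_erase, and_comm]
    rw [hset, Finset.card_erase_of_mem h0mem]
  have hF4 := card_main (p := p) hp2
  have hpQ : (4 : ℚ) ≤ (p : ℚ) := by exact_mod_cast h4p
  have hq1 : (p : ℚ) - 1 ≠ 0 := by intro h; nlinarith
  have hq2 : (p : ℚ) + 1 ≠ 0 := by positivity
  constructor
  · intro h1
    have hZ := card_Z_one (p := p) hp2 h1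
    have htot : (univ.filter fun v : Fin 4 → ZMod p => descartesForm v = 0).card
        = p ^ 2 * (p - 1) + p * (1 + (p - 1) * 2) := by
      rw [hF4, card_quad hp2, hZ]
    have key : p ^ 2 * (p - 1) + p * (1 + (p - 1) * 2) - 1 = (p - 1) * (p + 1) ^ 2 := by
      obtain ⟨m, rfl⟩ : ∃ m, p = m + 1 := ⟨p - 1, (Nat.sub_add_cancel h1p).symm⟩
      simp only [Nat.add_sub_cancel]
      apply Nat.sub_eq_of_eq_add
      ring
    rw [hnum, hden, htot, key]
    push_cast [Nat.cast_sub h1p]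
    field_simp
  · intro h3
    have hZ := card_Z_three (p := p) h3
    have htot : (univ.filter fun v : Fin 4 → ZMod p => descartesForm v = 0).card
        = p ^ 2 * (p - 1) + p * 1 := by
      rw [hF4, card_quad hp2, hZ]
    have key : p ^ 2 * (p - 1) + p * 1 - 1 = (p - 1) * (p ^ 2 + 1) := by
      obtain ⟨m, rfl⟩ : ∃ m, p = m + 1 := ⟨p - 1, (Nat.sub_add_cancel h1p).symm⟩
      simp only [Nat.add_sub_cancel]
      apply Nat.sub_eq_of_eq_add
      ring
    have hq3 : (p : ℚ) ^ 2 + 1 ≠ 0 := by positivity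
    rw [hnum, hden, htot, key]
    push_cast [Nat.cast_sub h1p]
    field_simp
end
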